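/- For every v ∈ (1/2+ℤ≥0)ⁿ₊, one has |v_{1/2}(p_{1/2}(v))| ≤ |v|. -/

import Mathlib

open Finset

/-- A partition of `N`: an antitone function `ℕ → ℕ` (the 0-indexed parts, padded with
zeros) supported on `{0, …, N-1}` whose parts sum to `N`. -/
def IsPartition (N : ℕ) (p : ℕ → ℕ) : Prop :=
  Antitone p ∧ (∀ i, N ≤ i → p i = 0) ∧ ∑ i ∈ Finset.range N, p i = N

/-- Dominance order: `Dominates p q` means `q ≤ p`, i.e. every partial sum of the parts
of `q` is at most the corresponding partial sum of the parts of `p`. -/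
def Dominates (p q : ℕ → ℕ) : Prop :=
  ∀ j, ∑ i ∈ Finset.range j, q i ≤ ∑ i ∈ Finset.range j, p i

/-- Multiplicity of the value `k` among the first `N` parts of `p`. -/
def mult (N : ℕ) (p : ℕ → ℕ) (k : ℕ) : ℕ :=
  ((Finset.range N).filter (fun i => p i = k)).card

/-- Multiplicity of the real value `s` among the entries of the tuple `v`. -/
noncomputable def multR {n : ℕ} (v : Fin n → ℝ) (s : ℝ) : ℕ :=
  {i : Fin n | v i = s}.ncard

/-- Euclidean norm of a real tuple. -/
noncomputable def enormR {n : ℕ} (v : Fin n → ℝ) : ℝ :=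
  Real.sqrt (∑ i, (v i) ^ 2)

/-- `IsVHalf n p w` says that the weakly decreasing tuple `w : Fin n → ℝ` is the tuple
having `ν_k = p (k-1)` entries equal to `(2k-1)/2` for each `k ≥ 1`, where
`p = [ν₁, ν₂, …]` is a partition of `n`. -/
def IsVHalf (n : ℕ) (p : ℕ → ℕ) (w : Fin n → ℝ) : Prop :=
  Antitone w ∧ (∀ i, ∃ k : ℕ, 1 ≤ k ∧ w i = (2 * (k : ℝ) - 1) / 2) ∧
  ∀ k : ℕ, 1 ≤ k → multR w ((2 * (k : ℝ) - 1) / 2) = p (k - 1)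

/-- `IsPHalf n v q` says that the partition `q` of `n` is the weakly decreasing
rearrangement of the multiplicity sequence `[m_v(1/2), m_v(3/2), m_v(5/2), …]`. -/
def IsPHalf (n : ℕ) (v : Fin n → ℝ) (q : ℕ → ℕ) : Prop :=
  IsPartition n q ∧
  ∀ c : ℕ, 1 ≤ c →
    mult n q c = {k : ℕ | 1 ≤ k ∧ multR v ((2 * (k : ℝ) - 1) / 2) = c}.ncard

noncomputable def tval (k : ℕ) : ℝ := (2 * (k : ℝ) - 1) / 2

lemma tval_lt {j k : ℕ} (h : j < k) : tval j < tval k := by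
  unfold tval
  have : (j:ℝ) < k := by exact_mod_cast h
  linarith

lemma tval_mono {j k : ℕ} (h : j ≤ k) : tval j ≤ tval k := by
  rcases eq_or_lt_of_le h with rfl | h
  · exact le_rfl
  · exact (tval_lt h).le

lemma multR_eq_card {n : ℕ} (u : Fin n → ℝ) (s : ℝ) :
    multR u s = (univ.filter (fun i => u i = s)).card := by
  rw [multR, ← Set.ncard_coe_finset]
  congr 1
  ext i
  simp

lemma multR_tval_zero {n : ℕ} (u : Fin n → ℝ) (hu : ∀ i, ∃ k, 1 ≤ k ∧ u i = tval k) :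
    multR u (tval 0) = 0 := by
  rw [multR_eq_card, Finset.card_eq_zero, Finset.filter_eq_empty_iff]
  intro i _
  obtain ⟨k, hk1, hk⟩ := hu i
  rw [hk]
  exact (tval_lt hk1).ne'

lemma count_lt {n : ℕ} (u : Fin n → ℝ) (hu : ∀ i, ∃ k, 1 ≤ k ∧ u i = tval k) (K : ℕ) :
    (univ.filter (fun i => u i < tval K)).card = ∑ k ∈ range K, multR u (tval k) := by
  have hset : univ.filter (fun i => u i < tval K)
      = (range K).biUnion (fun k => univ.filter (fun i => u i = tval k)) := by
    ext i
    simp only [mem_filter, mem_univ, true_and, mem_biUnion, mem_range]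
    constructor
    · intro h
      obtain ⟨k, hk1, hk2⟩ := hu i
      refine ⟨k, ?_, hk2⟩
      by_contra hKk
      exact absurd (hk2 ▸ h) (not_lt.2 (tval_mono (not_lt.1 hKk)))
    · rintro ⟨k, hkK, he⟩
      exact he ▸ tval_lt hkK
  rw [hset, Finset.card_biUnion]
  · exact Finset.sum_congr rfl fun k _ => (multR_eq_card u (tval k)).symm
  · intro a _ b _ hab
    refine Finset.disjoint_filter_filter' _ _ ?_
    intro p hp1 hp2 i hi
    have := (hp1 i hi).symm.trans (hp2 i hi)
    rcases lt_trichotomy a b with h | h | h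
    · exact absurd this (ne_of_lt (tval_lt h))
    · exact hab h
    · exact absurd this.symm (ne_of_lt (tval_lt h))

lemma layer_cake (n : ℕ) (f : ℕ → ℕ) (s : Finset ℕ) (hf : ∀ x ∈ s, f x ≤ n) :
    ∑ x ∈ s, f x = ∑ c ∈ Icc 1 n, (s.filter (fun x => c ≤ f x)).card := by
  have hcf : ∀ c, (s.filter (fun x => c ≤ f x)).card = ∑ x ∈ s, if c ≤ f x then 1 else 0 := by
    intro c; rw [Finset.card_filter]
  simp_rw [hcf]
  rw [Finset.sum_comm]
  refine Finset.sum_congr rfl fun x hx => ?_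
  have h1 : ∑ c ∈ Icc 1 n, (if c ≤ f x then 1 else 0)
      = ((Icc 1 n).filter (fun c => c ≤ f x)).card := by
    rw [Finset.card_filter]
  rw [h1]
  have h2 : (Icc 1 n).filter (fun c => c ≤ f x) = Icc 1 (f x) := by
    ext c
    simp only [mem_filter, mem_Icc]
    have := hf x hx
    omega
  rw [h2, Nat.card_Icc]
  omega

lemma domination (n K : ℕ) (q m : ℕ → ℕ)
    (hqa : Antitone q) (hq0 : ∀ j, n ≤ j → q j = 0) (hqle : ∀ j, q j ≤ n)
    (hm0 : m 0 = 0) (hmle : ∀ k, m k ≤ n) (hmK : ∀ k, K ≤ k → m k = 0)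
    (hcnt : ∀ c, 1 ≤ c → ((range n).filter (fun j => q j = c)).card
        = ((Ico 1 K).filter (fun k => m k = c)).card) :
    ∀ r, ∑ k ∈ range (r + 1), m k ≤ ∑ j ∈ range r, q j := by
  intro r
  have hAB : ∀ c, 1 ≤ c → ((range n).filter (fun j => c ≤ q j)).card
      = ((Ico 1 K).filter (fun k => c ≤ m k)).card := by
    intro c hc
    have h1 : ((range n).filter (fun j => c ≤ q j)).card
        = ∑ c' ∈ Icc c n, ((range n).filter (fun j => q j = c')).card := by
      rw [Finset.card_eq_sum_card_fiberwise (f := q) (t := Icc c n)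
        (fun j hj => by simp only [Finset.mem_coe, mem_filter, mem_range] at hj; simp [mem_Icc, hj.2, hqle j])]
      refine Finset.sum_congr rfl fun c' hc' => ?_
      rw [Finset.filter_filter]
      congr 1
      refine Finset.filter_congr fun j _ => ?_
      simp only [mem_Icc] at hc'
      constructor
      · rintro ⟨_, h⟩; exact h
      · intro h; exact ⟨h ▸ hc'.1, h⟩
    have h2 : ((Ico 1 K).filter (fun k => c ≤ m k)).card
        = ∑ c' ∈ Icc c n, ((Ico 1 K).filter (fun k => m k = c')).card := by
      rw [Finset.card_eq_sum_card_fiberwise (f := m) (t := Icc c n)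
        (fun j hj => by simp only [Finset.mem_coe, mem_filter, mem_Ico] at hj; simp [mem_Icc, hj.2, hmle j])]
      refine Finset.sum_congr rfl fun c' hc' => ?_
      rw [Finset.filter_filter]
      congr 1
      refine Finset.filter_congr fun j _ => ?_
      simp only [mem_Icc] at hc'
      constructor
      · rintro ⟨_, h⟩; exact h
      · intro h; exact ⟨h ▸ hc'.1, h⟩
    rw [h1, h2]
    refine Finset.sum_congr rfl fun c' hc' => ?_
    simp only [mem_Icc] at hc'
    exact hcnt c' (le_trans hc hc'.1)
  have hkey : ∀ c, 1 ≤ c → ∀ j,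
      (c ≤ q j ↔ j < ((range n).filter (fun j' => c ≤ q j')).card) := by
    intro c hc j
    constructor
    · intro h
      have hsub : range (j + 1) ⊆ (range n).filter (fun j' => c ≤ q j') := by
        intro j' hj'
        simp only [mem_range] at hj'
        have hq' : c ≤ q j' := le_trans h (hqa (by omega))
        have hjn : j' < n := by
          by_contra hh
          rw [hq0 j' (by omega)] at hq'; omega
        simp [mem_filter, mem_range, hjn, hq']
      have := Finset.card_le_card hsub
      simp only [Finset.card_range] at this
      omega
    · intro h
      by_contra hcq
      have hsub : (range n).filter (fun j' => c ≤ q j') ⊆ range j := by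
        intro j' hj'
        simp only [mem_filter, mem_range] at hj' ⊢
        by_contra hh
        exact hcq (le_trans hj'.2 (hqa (by omega)))
      have := Finset.card_le_card hsub
      simp only [Finset.card_range] at this
      omega
  have hqsum : ∑ j ∈ range r, q j
      = ∑ c ∈ Icc 1 n, min r (((range n).filter (fun j' => c ≤ q j')).card) := by
    rw [layer_cake n q (range r) (fun x _ => hqle x)]
    refine Finset.sum_congr rfl fun c hc => ?_
    simp only [mem_Icc] at hc
    have he : (range r).filter (fun j => c ≤ q j)
        = range (min r (((range n).filter (fun j' => c ≤ q j')).card)) := by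
      ext j
      simp only [mem_filter, mem_range, lt_min_iff, hkey c hc.1 j]
      try tauto
    rw [he, Finset.card_range]
  have hmsum : ∑ k ∈ range (r + 1), m k = ∑ k ∈ Ico 1 (r + 1), m k := by
    rw [range_eq_Ico, ← Finset.sum_Ico_consecutive _ (Nat.zero_le 1) (by omega)]
    simp [hm0]
  rw [hmsum, hqsum, layer_cake n m (Ico 1 (r + 1)) (fun x _ => hmle x)]
  refine Finset.sum_le_sum fun c hc => ?_
  simp only [mem_Icc] at hc
  refine le_min ?_ ?_
  · calc ((Ico 1 (r + 1)).filter (fun k => c ≤ m k)).card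
        ≤ (Ico 1 (r + 1)).card := Finset.card_filter_le _ _
      _ = r := by rw [Nat.card_Ico]; omega
  · rw [hAB c hc.1]
    refine Finset.card_le_card ?_
    intro k hk
    simp only [mem_filter, mem_Ico] at hk ⊢
    refine ⟨⟨hk.1.1, ?_⟩, hk.2⟩
    by_contra hh
    have := hmK k (by omega)
    omega


/-- For every `v ∈ (1/2+ℤ≥0)ⁿ₊` (weakly decreasing,
with all entries of the form `(2k-1)/2` for `k ≥ 1`), one has
`|v_{1/2}(p_{1/2}(v))| ≤ |v|`. -/
theorem statement13 (n : ℕ) (hn : 1 ≤ n)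
    (v : Fin n → ℝ) (hv : Antitone v)
    (hvmem : ∀ i, ∃ k : ℕ, 1 ≤ k ∧ v i = (2 * (k : ℝ) - 1) / 2)
    (q : ℕ → ℕ) (hq : IsPHalf n v q)
    (w : Fin n → ℝ) (hw : IsVHalf n q w) :
    enormR w ≤ enormR v := by
  obtain ⟨⟨hqa, hq0, hqsum⟩, hqcnt⟩ := hq
  obtain ⟨hwa, hwmem, hwmult⟩ := hw
  have hvmem' : ∀ i, ∃ k, 1 ≤ k ∧ v i = tval k := hvmem
  have hwmem' : ∀ i, ∃ k, 1 ≤ k ∧ w i = tval k := hwmem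
  have hwmult' : ∀ k, 1 ≤ k → multR w (tval k) = q (k - 1) := hwmult
  have hqcnt' : ∀ c, 1 ≤ c →
      mult n q c = {k : ℕ | 1 ≤ k ∧ multR v (tval k) = c}.ncard := hqcnt
  -- bound on q
  have hqle : ∀ j, q j ≤ n := by
    intro j
    by_cases hj : j < n
    · calc q j ≤ ∑ i ∈ range n, q i :=
          Finset.single_le_sum (fun _ _ => Nat.zero_le _) (mem_range.2 hj)
        _ = n := hqsum
    · rw [hq0 j (le_of_not_gt hj)]; exact Nat.zero_le n
  -- support of multiplicities of v
  obtain ⟨k0, hk01, hk0⟩ := hvmem' ⟨0, by omega⟩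
  have hmK : ∀ k, k0 + 1 ≤ k → multR v (tval k) = 0 := by
    intro k hk
    rw [multR_eq_card, Finset.card_eq_zero, Finset.filter_eq_empty_iff]
    intro i _
    obtain ⟨k', h1', h2'⟩ := hvmem' i
    rw [h2']
    intro hE
    have hle0 : v i ≤ v ⟨0, by omega⟩ := hv (by simp [Fin.le_def])
    rw [h2', hk0] at hle0
    have h3 := tval_lt (show k0 < k by omega)
    rw [← hE] at h3
    linarith
  have hmle : ∀ k, multR v (tval k) ≤ n := by
    intro k
    rw [multR_eq_card]
    exact (Finset.card_filter_le _ _).trans (by simp)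
  have hm0 : multR v (tval 0) = 0 := multR_tval_zero v hvmem'
  -- count hypothesis
  have hcnt : ∀ c, 1 ≤ c → ((range n).filter (fun j => q j = c)).card
      = ((Ico 1 (k0 + 1)).filter (fun k => multR v (tval k) = c)).card := by
    intro c hc
    have h := hqcnt' c hc
    rw [mult] at h
    have hset : {k : ℕ | 1 ≤ k ∧ multR v (tval k) = c}
        = ↑((Ico 1 (k0 + 1)).filter (fun k => multR v (tval k) = c)) := by
      ext k
      simp only [Set.mem_setOf_eq, Finset.coe_filter, mem_Ico]
      constructor
      · rintro ⟨h1, h2⟩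
        refine ⟨⟨h1, ?_⟩, h2⟩
        by_contra hh
        have := hmK k (by omega)
        omega
      · rintro ⟨⟨h1, _⟩, h2⟩
        exact ⟨h1, h2⟩
    rw [hset, Set.ncard_coe_finset] at h
    exact h
  have hdom := domination n (k0 + 1) q (fun k => multR v (tval k))
    hqa hq0 hqle hm0 hmle hmK hcnt
  -- pointwise comparison
  have hpw : ∀ i : Fin n, w i ^ 2 ≤ v i ^ 2 := by
    intro i
    obtain ⟨k, hk1, hwk⟩ := hwmem' i
    have hwpos : (0:ℝ) ≤ w i := by
      rw [hwk]
      have h1 : tval 1 ≤ tval k := tval_mono hk1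
      have : tval 1 = 1/2 := by norm_num [tval]
      linarith
    have hle : w i ≤ v i := by
      rw [hwk]
      by_contra hlt
      push_neg at hlt
      have hCv := count_lt v hvmem' k
      have hCw := count_lt w hwmem' k
      have hwm : ∑ jj ∈ range k, multR w (tval jj) = ∑ jj ∈ range (k - 1), q jj := by
        rw [range_eq_Ico, ← Finset.sum_Ico_consecutive _ (Nat.zero_le 1) (by omega : 1 ≤ k)]
        have h00 : ∑ jj ∈ Ico 0 1, multR w (tval jj) = 0 := by
          simp [multR_tval_zero w hwmem']
        rw [h00, zero_add, Finset.sum_Ico_eq_sum_range]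
        refine Finset.sum_congr rfl fun j _ => ?_
        rw [hwmult' (1 + j) (by omega), show 1 + j - 1 = j from by omega]
      have hdle : (univ.filter (fun j => v j < tval k)).card
          ≤ (univ.filter (fun j => w j < tval k)).card := by
        rw [hCv, hCw, hwm]
        have := hdom (k - 1)
        rwa [show k - 1 + 1 = k from by omega] at this
      have hlow : n - i.val ≤ (univ.filter (fun j => v j < tval k)).card := by
        have hsub : Finset.Ici i ⊆ univ.filter (fun j => v j < tval k) := by
          intro j hj
          simp only [Finset.mem_Ici] at hj
          simp only [mem_filter, mem_univ, true_and]
          exact lt_of_le_of_lt (hv hj) hlt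
        have := Finset.card_le_card hsub
        rwa [Fin.card_Ici] at this
      have hhigh : (univ.filter (fun j => w j < tval k)).card ≤ n - 1 - i.val := by
        have hsub : univ.filter (fun j => w j < tval k) ⊆ Finset.Ioi i := by
          intro j hj
          simp only [mem_filter, mem_univ, true_and] at hj
          simp only [Finset.mem_Ioi]
          by_contra hh
          push_neg at hh
          have : w i ≤ w j := hwa hh
          rw [hwk] at this
          linarith
        have := Finset.card_le_card hsub
        rwa [Fin.card_Ioi] at this
      have hi := i.isLt
      omega
    exact pow_le_pow_left₀ hwpos hle 2
  rw [enormR, enormR]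
  exact Real.sqrt_le_sqrt (Finset.sum_le_sum fun i _ => hpw i)
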